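/- Let X, Y be integrable real random variables, h(p) = F⁻¹_Y(p) − F⁻¹_X(p) for p ∈ (0,1), l(p) = F^{(−2)}_Y(p) − F^{(−2)}_X(p) for p ∈ [0,1], A = {p ∈ (0,1] : l(q) < l(p) for all q < p} and A^C = [0,1] ∖ A. Define Q(p) = F⁻¹_Y(p) for p ∈ A and Q(p) = F⁻¹_X(p) for p ∈ A^C ∩ (0,1), and Q̂(p) = lim_{ε↓0} Q(p−ε). Then Q is nondecreasing on (0,1), and Q̂ is well-defined, nondecreasing and left-continuous on (0,1). -/

import Mathlib

open MeasureTheory Filter Set Topology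

noncomputable section

/-- Distribution function `F_Z(η) = P(Z ≤ η)`. -/
def cdfRV {Ω : Type*} [MeasurableSpace Ω] (P : Measure Ω) (Z : Ω → ℝ) (η : ℝ) : ℝ :=
  (P {ω | Z ω ≤ η}).toReal

/-- Quantile function `F⁻¹_Z(p) = inf {η | F_Z(η) ≥ p}`. -/
def qf {Ω : Type*} [MeasurableSpace Ω] (P : Measure Ω) (Z : Ω → ℝ) (p : ℝ) : ℝ :=
  sInf {η : ℝ | p ≤ cdfRV P Z η}

/-- Absolute Lorenz function `F^{(-2)}_Z(p) = ∫₀^p F⁻¹_Z(t) dt`. -/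
def lorenz {Ω : Type*} [MeasurableSpace Ω] (P : Measure Ω) (Z : Ω → ℝ) (p : ℝ) : ℝ :=
  ∫ t in (0:ℝ)..p, qf P Z t

/-- Shortfall function `F^{(2)}_Z(η) = E[max(η - Z, 0)]`. -/
def shortfall {Ω : Type*} [MeasurableSpace Ω] (P : Measure Ω) (Z : Ω → ℝ) (η : ℝ) : ℝ :=
  ∫ ω, max (η - Z ω) 0 ∂P

/-- Second-order stochastic dominance. -/
def SSD {Ω : Type*} [MeasurableSpace Ω] (P : Measure Ω) (Z Y : Ω → ℝ) : Prop :=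
  ∀ η : ℝ, shortfall P Z η ≤ shortfall P Y η

/-- First-order Wasserstein distance. -/
def W1 {Ω : Type*} [MeasurableSpace Ω] (P : Measure Ω) (X Z : Ω → ℝ) : ℝ :=
  ∫ p in (0:ℝ)..1, |qf P X p - qf P Z p|

/-- Distance from `X` to the set `A₂(Y)` of integrable random variables dominating `Y`
in the second order, in terms of `W₁`. -/
def distA2 {Ω : Type*} [MeasurableSpace Ω] (P : Measure Ω) (X Y : Ω → ℝ) : ℝ :=
  sInf {d : ℝ | ∃ Z : Ω → ℝ, Integrable Z P ∧ SSD P Z Y ∧ d = W1 P X Z}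

/-- An atomless probability space. -/
def Atomless {Ω : Type*} [MeasurableSpace Ω] (P : Measure Ω) : Prop :=
  ∀ s : Set Ω, MeasurableSet s → P s ≠ 0 →
    ∃ t : Set Ω, t ⊆ s ∧ MeasurableSet t ∧ 0 < P t ∧ P t < P s

/-- `r`-th order shortfall transform `F^{(r)}_Z(η) = (1/Γ(r)) E[max(η-Z,0)^{r-1}]`,
with the convention `max(η-z,0)^0 = 𝟙_{z ≤ η}`. -/
def sfr {Ω : Type*} [MeasurableSpace Ω] (P : Measure Ω) (Z : Ω → ℝ) (r η : ℝ) : ℝ :=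
  (1 / Real.Gamma r) * ∫ ω, (if Z ω ≤ η then (η - Z ω) ^ (r - 1) else 0) ∂P

/-- `r`-th order stochastic dominance: `Z ≽_{(r)} Y`. -/
def domR {Ω : Type*} [MeasurableSpace Ω] (P : Measure Ω) (Z Y : Ω → ℝ) (r : ℝ) : Prop :=
  ∀ η : ℝ, sfr P Z r η ≤ sfr P Y r η


section QuantileAux

variable {Ω : Type*} [MeasurableSpace Ω] (P : Measure Ω) [IsProbabilityMeasure P] (Z : Ω → ℝ)

lemma cdf_mono : Monotone (cdfRV P Z) := by
  intro a b hab
  have h1 : P {ω | Z ω ≤ a} ≤ P {ω | Z ω ≤ b} :=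
    measure_mono (fun ω hω => le_trans hω hab)
  exact ENNReal.toReal_mono (measure_ne_top _ _) h1

lemma cdf_congr {X Y : Ω → ℝ} (h : X =ᵐ[P] Y) : cdfRV P X = cdfRV P Y := by
  funext η
  unfold cdfRV
  congr 1
  apply measure_congr
  filter_upwards [h] with ω hω
  change (X ω ≤ η) = (Y ω ≤ η)
  rw [hω]

lemma qf_congr {X Y : Ω → ℝ} (h : X =ᵐ[P] Y) : qf P X = qf P Y := by
  funext p; unfold qf; rw [cdf_congr P h]

variable (hZm : Measurable Z)
include hZm

lemma cdf_tendsto_one : Tendsto (fun n : ℕ => cdfRV P Z n) atTop (𝓝 1) := by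
  have hu : (⋃ n : ℕ, {ω | Z ω ≤ (n : ℝ)}) = univ := by
    ext ω; simp only [mem_iUnion, mem_univ, iff_true, mem_setOf_eq]
    obtain ⟨n, hn⟩ := exists_nat_ge (Z ω)
    exact ⟨n, hn⟩
  have hm : Monotone (fun n : ℕ => {ω | Z ω ≤ (n : ℝ)}) := by
    intro a b hab ω hω
    simp only [mem_setOf_eq] at hω ⊢
    exact le_trans hω (by exact_mod_cast hab)
  have := tendsto_measure_iUnion_atTop (μ := P) hm
  rw [hu, measure_univ] at this
  have h2 := (ENNReal.tendsto_toReal ENNReal.one_ne_top).comp this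
  exact h2

lemma cdf_tendsto_zero : Tendsto (fun n : ℕ => cdfRV P Z (-n)) atTop (𝓝 0) := by
  have hu : (⋂ n : ℕ, {ω | Z ω ≤ -(n : ℝ)}) = ∅ := by
    ext ω
    simp only [mem_iInter, mem_empty_iff_false, iff_false, not_forall, mem_setOf_eq, not_le]
    obtain ⟨n, hn⟩ := exists_nat_gt (-Z ω)
    exact ⟨n, by linarith⟩
  have hm : Antitone (fun n : ℕ => {ω | Z ω ≤ -(n : ℝ)}) := by
    intro a b hab ω hω
    simp only [mem_setOf_eq] at hω ⊢
    refine le_trans hω (by simp only [neg_le_neg_iff]; exact_mod_cast hab)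
  have := tendsto_measure_iInter_atTop (μ := P)
    (fun n => (hZm measurableSet_Iic).nullMeasurableSet) hm ⟨0, measure_ne_top _ _⟩
  rw [show (⋂ n : ℕ, Z ⁻¹' Iic (-(n:ℝ))) = ∅ from hu, measure_empty] at this
  have h2 := (ENNReal.tendsto_toReal ENNReal.zero_ne_top).comp this
  exact h2

lemma qfSet_nonempty {p : ℝ} (hp : p < 1) : {η : ℝ | p ≤ cdfRV P Z η}.Nonempty := by
  have := (cdf_tendsto_one P Z hZm).eventually (eventually_ge_nhds hp)
  obtain ⟨n, hn⟩ := this.exists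
  exact ⟨n, hn⟩

lemma qfSet_bddBelow {p : ℝ} (hp : 0 < p) : BddBelow {η : ℝ | p ≤ cdfRV P Z η} := by
  have := (cdf_tendsto_zero P Z hZm).eventually_lt_const hp
  obtain ⟨n, hn⟩ := this.exists
  refine ⟨-n, fun η hη => ?_⟩
  by_contra hc
  push_neg at hc
  exact absurd (le_trans hη (cdf_mono P Z hc.le)) (not_le.mpr hn)

lemma qf_monoOn : MonotoneOn (qf P Z) (Ioo (0:ℝ) 1) := by
  intro p hp q hq hpq
  exact csInf_le_csInf (qfSet_bddBelow P Z hZm hp.1)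
    (qfSet_nonempty P Z hZm hq.2)
    (fun η hη => le_trans hpq hη)

lemma cdf_right_cont (η : ℝ) :
    Tendsto (fun n : ℕ => cdfRV P Z (η + 1 / (n + 1))) atTop (𝓝 (cdfRV P Z η)) := by
  have hu : (⋂ n : ℕ, {ω | Z ω ≤ η + 1 / (n + 1)}) = {ω | Z ω ≤ η} := by
    ext ω
    simp only [mem_iInter, mem_setOf_eq]
    constructor
    · intro h
      by_contra hc
      push_neg at hc
      obtain ⟨n, hn⟩ := exists_nat_one_div_lt (sub_pos.mpr hc)
      have := h n
      linarith
    · intro h n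
      have : (0:ℝ) < 1 / (n + 1) := by positivity
      linarith
  have hm : Antitone (fun n : ℕ => {ω | Z ω ≤ η + 1 / (n + 1)}) := by
    intro a b hab ω hω
    simp only [mem_setOf_eq] at hω ⊢
    refine le_trans hω ?_
    have : (1:ℝ) / (b + 1) ≤ 1 / (a + 1) := by
      apply one_div_le_one_div_of_le (by positivity)
      exact_mod_cast Nat.succ_le_succ hab
    linarith
  have := tendsto_measure_iInter_atTop (μ := P)
    (fun n => (hZm measurableSet_Iic).nullMeasurableSet) hm ⟨0, measure_ne_top _ _⟩
  rw [show (⋂ n : ℕ, Z ⁻¹' Iic (η + 1 / ((n:ℝ) + 1))) = {ω | Z ω ≤ η} from hu] at this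
  have h2 := (ENNReal.tendsto_toReal (measure_ne_top P _)).comp this
  exact h2

lemma qf_le_iff {p η : ℝ} (hp : 0 < p) (hp1 : p < 1) :
    qf P Z p ≤ η ↔ p ≤ cdfRV P Z η := by
  constructor
  · intro h
    have key : ∀ n : ℕ, p ≤ cdfRV P Z (η + 1 / (n + 1)) := by
      intro n
      have hpos : (0:ℝ) < 1 / (n + 1) := by positivity
      have : qf P Z p < η + 1 / (n + 1) := lt_of_le_of_lt h (by linarith)
      obtain ⟨η', hη', hlt⟩ := exists_lt_of_csInf_lt (qfSet_nonempty P Z hZm hp1) this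
      exact le_trans hη' (cdf_mono P Z hlt.le)
    exact ge_of_tendsto (cdf_right_cont P Z hZm η) (Eventually.of_forall key)
  · intro h
    exact csInf_le (qfSet_bddBelow P Z hZm hp) h

set_option linter.unusedSectionVars false

lemma qf_aemeasurable : AEMeasurable (qf P Z) (volume.restrict (Ioo (0:ℝ) 1)) := by
  set g : ℝ → ℝ := fun t => if t ∈ Ioo (0:ℝ) 1 then qf P Z t else 0 with hgdef
  have hgm : Measurable g := by
    apply measurable_of_Iic
    intro η
    rcases le_or_gt 0 η with h0 | h0
    · have : g ⁻¹' Iic η = (Ioo (0:ℝ) 1 ∩ Iic (cdfRV P Z η)) ∪ (Ioo (0:ℝ) 1)ᶜ := by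
        ext t
        by_cases ht : t ∈ Ioo (0:ℝ) 1
        · simp only [mem_inter_iff, mem_preimage, mem_Iic, mem_compl_iff, mem_Ioo, hgdef,
            mem_union]
          rw [if_pos (mem_Ioo.mp ht)]
          simp [mem_Ioo.mp ht, qf_le_iff P Z hZm ht.1 ht.2]
        · simp only [mem_preimage, mem_Iic, hgdef, mem_union, mem_compl_iff]
          rw [if_neg (by simpa [mem_Ioo] using ht)]
          simp [h0, ht]
      rw [this]
      exact (measurableSet_Ioo.inter measurableSet_Iic).union measurableSet_Ioo.compl
    · have : g ⁻¹' Iic η = Ioo (0:ℝ) 1 ∩ Iic (cdfRV P Z η) := by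
        ext t
        by_cases ht : t ∈ Ioo (0:ℝ) 1
        · simp only [mem_inter_iff, mem_preimage, mem_Iic, mem_Ioo, hgdef]
          rw [if_pos (mem_Ioo.mp ht)]
          simp [mem_Ioo.mp ht, qf_le_iff P Z hZm ht.1 ht.2]
        · simp only [mem_preimage, mem_Iic, mem_inter_iff, mem_Ioo, hgdef]
          rw [if_neg (by simpa [mem_Ioo] using ht)]
          simp only [not_le.mpr h0, false_iff]
          rintro ⟨⟨h1, h2⟩, -⟩
          exact ht (mem_Ioo.mpr ⟨h1, h2⟩)
      rw [this]
      exact measurableSet_Ioo.inter measurableSet_Iic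
  refine ⟨g, hgm, ?_⟩
  filter_upwards [ae_restrict_mem measurableSet_Ioo] with t ht
  rw [hgdef]
  simp only []
  rw [if_pos ht]

lemma qf_map : Measure.map (qf P Z) (volume.restrict (Ioo (0:ℝ) 1)) = Measure.map Z P := by
  have hqa := qf_aemeasurable P Z hZm
  have h1 : IsProbabilityMeasure (volume.restrict (Ioo (0:ℝ) 1)) :=
    ⟨by simp [Real.volume_Ioo]⟩
  have h2 : IsProbabilityMeasure (Measure.map (qf P Z) (volume.restrict (Ioo (0:ℝ) 1))) :=
    Measure.isProbabilityMeasure_map hqa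
  have h3 : IsProbabilityMeasure (Measure.map Z P) :=
    Measure.isProbabilityMeasure_map hZm.aemeasurable
  refine Measure.ext_of_Iic _ _ (fun η => ?_)
  rw [Measure.map_apply_of_aemeasurable hqa measurableSet_Iic,
      Measure.map_apply hZm measurableSet_Iic,
      Measure.restrict_apply' measurableSet_Ioo]
  have hc0 : 0 ≤ cdfRV P Z η := ENNReal.toReal_nonneg
  have hc1 : cdfRV P Z η ≤ 1 := by
    have h := prob_le_one (μ := P) (s := {ω | Z ω ≤ η})
    simpa [cdfRV] using ENNReal.toReal_mono ENNReal.one_ne_top h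
  have hset : qf P Z ⁻¹' Iic η ∩ Ioo 0 1 = Iic (cdfRV P Z η) ∩ Ioo 0 1 := by
    ext t
    simp only [mem_inter_iff, mem_preimage, mem_Iic, mem_Ioo, and_congr_left_iff]
    intro ht
    exact qf_le_iff P Z hZm ht.1 ht.2
  rw [hset]
  have hZval : P (Z ⁻¹' Iic η) = ENNReal.ofReal (cdfRV P Z η) := by
    rw [cdfRV, ENNReal.ofReal_toReal (measure_ne_top P _)]
    rfl
  rw [hZval]
  rcases lt_or_eq_of_le hc1 with hlt | heq
  · have : Iic (cdfRV P Z η) ∩ Ioo 0 1 = Ioc 0 (cdfRV P Z η) := by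
      ext t
      simp only [mem_inter_iff, mem_Iic, mem_Ioo, mem_Ioc]
      constructor
      · rintro ⟨h1, h2, h3⟩; exact ⟨h2, h1⟩
      · rintro ⟨h1, h2⟩; exact ⟨h2, h1, lt_of_le_of_lt h2 hlt⟩
    rw [this, Real.volume_Ioc]
    simp
  · have : Iic (cdfRV P Z η) ∩ Ioo 0 1 = Ioo 0 1 := by
      rw [inter_eq_right]
      intro t ht
      simp only [mem_Iic]
      rw [heq]
      exact ht.2.le
    rw [this, Real.volume_Ioo, heq]
    simp

lemma qf_integrableOn (hZi : Integrable Z P) :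
    IntegrableOn (qf P Z) (Ioo (0:ℝ) 1) volume := by
  have hqa := qf_aemeasurable P Z hZm
  have h1 : Integrable (id ∘ qf P Z) (volume.restrict (Ioo (0:ℝ) 1)) := by
    rw [← integrable_map_measure measurable_id.aestronglyMeasurable hqa, qf_map P Z hZm,
        integrable_map_measure measurable_id.aestronglyMeasurable hZm.aemeasurable]
    simpa [Function.id_comp] using hZi
  simpa [Function.id_comp, IntegrableOn] using h1

lemma qf_intervalIntegrable (hZi : Integrable Z P) {a b : ℝ} (ha : 0 ≤ a) (hb : b < 1)
    (hab : a ≤ b) : IntervalIntegrable (qf P Z) volume a b := by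
  rw [intervalIntegrable_iff_integrableOn_Ioc_of_le hab]
  exact (qf_integrableOn P Z hZm hZi).mono_set
    (fun t ht => ⟨lt_of_le_of_lt ha ht.1, lt_of_le_of_lt ht.2 hb⟩)

lemma lorenz_sub (hZi : Integrable Z P) {m q : ℝ} (hm : 0 ≤ m) (hq : q < 1) (hmq : m ≤ q) :
    lorenz P Z q - lorenz P Z m = ∫ t in m..q, qf P Z t := by
  unfold lorenz
  exact intervalIntegral.integral_interval_sub_left
    (qf_intervalIntegrable P Z hZm hZi le_rfl hq (hm.trans hmq))
    (qf_intervalIntegrable P Z hZm hZi le_rfl (lt_of_le_of_lt hmq hq) hm)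

omit hZm

lemma exists_le_of_integral_nonpos {f g : ℝ → ℝ} {m q : ℝ} (hmq : m < q)
    (hf : IntervalIntegrable f volume m q) (hg : IntervalIntegrable g volume m q)
    (hint : (∫ t in m..q, (g t - f t)) ≤ 0) :
    ∃ t ∈ Ioo m q, g t ≤ f t := by
  by_contra hc
  push_neg at hc
  have hpos : 0 < ∫ t in m..q, (g t - f t) :=
    intervalIntegral.intervalIntegral_pos_of_pos_on (hg.sub hf)
      (fun t ht => sub_pos.mpr (hc t ht)) hmq
  linarith

end QuantileAux

/-- the function `Q` (equal to `F⁻¹_Y` on `A` and to `F⁻¹_X` off `A`) is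
nondecreasing on `(0,1)`, and its left-limit function `Q̂` is well defined, nondecreasing
and left-continuous on `(0,1)`. -/
theorem stmt11 {Ω : Type*} [MeasurableSpace Ω] (P : Measure Ω) [IsProbabilityMeasure P]
    (X Y : Ω → ℝ) (hX : Integrable X P) (hY : Integrable Y P)
    (h l : ℝ → ℝ)
    (hh : ∀ p, h p = qf P Y p - qf P X p)
    (hl : ∀ p, l p = lorenz P Y p - lorenz P X p)
    (A : Set ℝ)
    (hA : A = {p : ℝ | p ∈ Set.Ioc (0:ℝ) 1 ∧ ∀ q ∈ Set.Ico (0:ℝ) p, l q < l p})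
    (Q : ℝ → ℝ)
    (hQA : ∀ p ∈ A, Q p = qf P Y p)
    (hQX : ∀ p ∉ A, Q p = qf P X p) :
    MonotoneOn Q (Set.Ioo (0:ℝ) 1) ∧
    ∃ Qh : ℝ → ℝ,
      (∀ p ∈ Set.Ioo (0:ℝ) 1, Tendsto Q (nhdsWithin p (Set.Iio p)) (nhds (Qh p))) ∧
      MonotoneOn Qh (Set.Ioo (0:ℝ) 1) ∧
      (∀ p ∈ Set.Ioo (0:ℝ) 1, Tendsto Qh (nhdsWithin p (Set.Iio p)) (nhds (Qh p))) := by
  -- measurable representatives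
  obtain ⟨X', hX'm, hXX'⟩ := hX.aemeasurable
  obtain ⟨Y', hY'm, hYY'⟩ := hY.aemeasurable
  have hX'i : Integrable X' P := hX.congr hXX'
  have hY'i : Integrable Y' P := hY.congr hYY'
  have hqfX : qf P X = qf P X' := qf_congr P hXX'
  have hqfY : qf P Y = qf P Y' := qf_congr P hYY'
  have hmonoX : MonotoneOn (qf P X) (Ioo (0:ℝ) 1) := hqfX ▸ qf_monoOn P X' hX'm
  have hmonoY : MonotoneOn (qf P Y) (Ioo (0:ℝ) 1) := hqfY ▸ qf_monoOn P Y' hY'm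
  have hintX : ∀ {a b : ℝ}, 0 ≤ a → b < 1 → a ≤ b → IntervalIntegrable (qf P X) volume a b :=
    fun ha hb hab => hqfX ▸ qf_intervalIntegrable P X' hX'm hX'i ha hb hab
  have hintY : ∀ {a b : ℝ}, 0 ≤ a → b < 1 → a ≤ b → IntervalIntegrable (qf P Y) volume a b :=
    fun ha hb hab => hqfY ▸ qf_intervalIntegrable P Y' hY'm hY'i ha hb hab
  have hlorX : lorenz P X = lorenz P X' := by funext p; unfold lorenz; rw [hqfX]
  have hlorY : lorenz P Y = lorenz P Y' := by funext p; unfold lorenz; rw [hqfY]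
  have hleq : ∀ m q : ℝ, 0 ≤ m → m ≤ q → q < 1 →
      l q - l m = ∫ t in m..q, (qf P Y t - qf P X t) := by
    intro m q hm hmq hq
    have h1 : lorenz P Y q - lorenz P Y m = ∫ t in m..q, qf P Y t := by
      rw [hlorY, hqfY]; exact lorenz_sub P Y' hY'm hY'i hm hq hmq
    have h2 : lorenz P X q - lorenz P X m = ∫ t in m..q, qf P X t := by
      rw [hlorX, hqfX]; exact lorenz_sub P X' hX'm hX'i hm hq hmq
    rw [hl, hl, intervalIntegral.integral_sub (hintY hm hq hmq) (hintX hm hq hmq),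
        ← h1, ← h2]
    ring
  -- monotonicity of Q
  have hQmono : MonotoneOn Q (Ioo (0:ℝ) 1) := by
    intro p hp q hq hpq
    rcases eq_or_lt_of_le hpq with rfl | hlt
    · exact le_rfl
    by_cases hpA : p ∈ A <;> by_cases hqA : q ∈ A
    · rw [hQA p hpA, hQA q hqA]; exact hmonoY hp hq hpq
    · -- p ∈ A, q ∉ A
      have hqIoc : q ∈ Ioc (0:ℝ) 1 := ⟨hq.1, hq.2.le⟩
      have hpA' := hpA
      have hqA2 := hqA
      rw [hA] at hpA' hqA2
      simp only [mem_setOf_eq, not_and, not_forall] at hqA2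
      obtain ⟨m, hmIco, hml⟩ := hqA2 hqIoc
      push_neg at hml
      obtain ⟨m', hpm', hm'q, hlq⟩ : ∃ m', p ≤ m' ∧ m' < q ∧ l q ≤ l m' := by
        rcases lt_or_ge m p with hcase | hcase
        · exact ⟨p, le_rfl, hlt, (hml.trans_lt (hpA'.2 m ⟨hmIco.1, hcase⟩)).le⟩
        · exact ⟨m, hcase, hmIco.2, hml⟩
      have hm'pos : (0:ℝ) ≤ m' := (hp.1.le).trans hpm'
      have hint : (∫ t in m'..q, (qf P Y t - qf P X t)) ≤ 0 := by
        have := hleq m' q hm'pos hm'q.le hq.2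
        linarith
      obtain ⟨t, htmem, hts⟩ := exists_le_of_integral_nonpos hm'q
        (hintX hm'pos hq.2 hm'q.le) (hintY hm'pos hq.2 hm'q.le) hint
      have htIoo : t ∈ Ioo (0:ℝ) 1 := ⟨lt_of_le_of_lt hm'pos htmem.1, htmem.2.trans hq.2⟩
      rw [hQA p hpA, hQX q hqA]
      calc qf P Y p ≤ qf P Y t := hmonoY hp htIoo (hpm'.trans htmem.1.le)
        _ ≤ qf P X t := hts
        _ ≤ qf P X q := hmonoX htIoo hq htmem.2.le
    · -- p ∉ A, q ∈ A
      have hqA' := hqA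
      rw [hA] at hqA'
      have hlp : l p < l q := hqA'.2 p ⟨hp.1.le, hlt⟩
      have hint : (∫ t in p..q, (qf P X t - qf P Y t)) ≤ 0 := by
        have h1 := hleq p q hp.1.le hpq hq.2
        have h2 : (∫ t in p..q, (qf P X t - qf P Y t))
            = (∫ t in p..q, qf P X t) - ∫ t in p..q, qf P Y t :=
          intervalIntegral.integral_sub (hintX hp.1.le hq.2 hpq) (hintY hp.1.le hq.2 hpq)
        have h3 : (∫ t in p..q, (qf P Y t - qf P X t))
            = (∫ t in p..q, qf P Y t) - ∫ t in p..q, qf P X t :=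
          intervalIntegral.integral_sub (hintY hp.1.le hq.2 hpq) (hintX hp.1.le hq.2 hpq)
        linarith
      obtain ⟨t, htmem, hts⟩ := exists_le_of_integral_nonpos hlt
        (hintY hp.1.le hq.2 hpq) (hintX hp.1.le hq.2 hpq) hint
      have htIoo : t ∈ Ioo (0:ℝ) 1 := ⟨hp.1.trans htmem.1, htmem.2.trans hq.2⟩
      rw [hQX p hpA, hQA q hqA]
      calc qf P X p ≤ qf P X t := hmonoX hp htIoo htmem.1.le
        _ ≤ qf P Y t := hts
        _ ≤ qf P Y q := hmonoY htIoo hq htmem.2.le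
    · rw [hQX p hpA, hQX q hqA]; exact hmonoX hp hq hpq
  refine ⟨hQmono, fun p => sSup (Q '' Ioo 0 p), ?_, ?_, ?_⟩
  · intro p hp
    have hne : (Ioo (0:ℝ) p).Nonempty := ⟨p / 2, by constructor <;> linarith [hp.1]⟩
    have hsub : Ioo (0:ℝ) p ⊆ Ioo (0:ℝ) 1 := fun t ht => ⟨ht.1, ht.2.trans hp.2⟩
    have hbdd : BddAbove (Q '' Ioo 0 p) := by
      refine ⟨Q p, ?_⟩
      rintro y ⟨t, ht, rfl⟩
      exact hQmono (hsub ht) hp ht.2.le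
    exact MonotoneOn.tendsto_nhdsWithin_Ioo_left hne (hQmono.mono hsub) hbdd
  · intro p hp q hq hpq
    have hneq : (Ioo (0:ℝ) q).Nonempty := ⟨q / 2, by constructor <;> linarith [hq.1]⟩
    have hnep : (Ioo (0:ℝ) p).Nonempty := ⟨p / 2, by constructor <;> linarith [hp.1]⟩
    have hsubq : Ioo (0:ℝ) q ⊆ Ioo (0:ℝ) 1 := fun t ht => ⟨ht.1, ht.2.trans hq.2⟩
    have hbddq : BddAbove (Q '' Ioo 0 q) := by
      refine ⟨Q q, ?_⟩
      rintro y ⟨t, ht, rfl⟩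
      exact hQmono (hsubq ht) hq ht.2.le
    exact csSup_le_csSup hbddq (hnep.image Q) (image_mono (Ioo_subset_Ioo le_rfl hpq))
  · intro p hp
    set Qh : ℝ → ℝ := fun r => sSup (Q '' Ioo 0 r) with hQhdef
    have hbddQ : ∀ r ∈ Ioo (0:ℝ) 1, BddAbove (Q '' Ioo 0 r) := by
      intro r hr
      refine ⟨Q r, ?_⟩
      rintro y ⟨t, ht, rfl⟩
      exact hQmono ⟨ht.1, ht.2.trans hr.2⟩ hr ht.2.le
    have hneQ : ∀ r : ℝ, 0 < r → (Ioo (0:ℝ) r).Nonempty :=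
      fun r hr => ⟨r / 2, by constructor <;> linarith⟩
    have hQhmono : MonotoneOn Qh (Ioo (0:ℝ) 1) := by
      intro a ha b hb hab
      exact csSup_le_csSup (hbddQ b hb) ((hneQ a ha.1).image Q)
        (image_mono (Ioo_subset_Ioo le_rfl hab))
    have hne : (Ioo (0:ℝ) p).Nonempty := hneQ p hp.1
    have hsub : Ioo (0:ℝ) p ⊆ Ioo (0:ℝ) 1 := fun t ht => ⟨ht.1, ht.2.trans hp.2⟩
    have hbddQh : BddAbove (Qh '' Ioo 0 p) := by
      refine ⟨Qh p, ?_⟩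
      rintro y ⟨t, ht, rfl⟩
      exact hQhmono (hsub ht) hp ht.2.le
    have hkey : sSup (Qh '' Ioo 0 p) = Qh p := by
      apply le_antisymm
      · apply csSup_le (hne.image Qh)
        rintro y ⟨t, ht, rfl⟩
        exact hQhmono (hsub ht) hp ht.2.le
      · apply csSup_le (hne.image Q)
        rintro y ⟨s, hs, rfl⟩
        have hsp : s < p := hs.2
        set t := (s + p) / 2 with htdef
        have hst : s < t := by rw [htdef]; linarith [hs.2]
        have htp : t < p := by rw [htdef]; linarith [hs.2]
        have ht0 : 0 < t := hs.1.trans hst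
        have htIoo1 : t ∈ Ioo (0:ℝ) 1 := ⟨ht0, htp.trans hp.2⟩
        have h1 : Q s ≤ Qh t := le_csSup (hbddQ t htIoo1) ⟨s, ⟨hs.1, hst⟩, rfl⟩
        have h2 : Qh t ≤ sSup (Qh '' Ioo 0 p) := le_csSup hbddQh ⟨t, ⟨ht0, htp⟩, rfl⟩
        exact h1.trans h2
    have := MonotoneOn.tendsto_nhdsWithin_Ioo_left hne (hQhmono.mono hsub) hbddQh
    rwa [hkey] at this


end
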